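/- arXiv:2305.19475 — 2 statements merged into one kernel-verified Lean document; each statement's English description precedes it below -/
import Mathlib

section
/- Let x_frac, x_integ : Q × C → ℝ with x_frac taking values in [0,1] and x_integ taking values in {0,1}. Suppose for constants α, β ∈ ℝ with 0 ≤ β ≤ α ≤ 1 and ρ ≥ 0, and a subset C_h ⊆ C, the fractional solution satisfies for every q: β·(∑_{j∈C} x_frac(q,j)) − ρ ≤ ∑_{j∈C_h} x_frac(q,j) ≤ α·(∑_{j∈C} x_frac(q,j)) + ρ. If additionally for every q: ⌊∑_{j∈C} x_frac(q,j)⌋ ≤ ∑_{j∈C} x_integ(q,j) ≤ ⌈∑_{j∈C} x_frac(q,j)⌉ and ⌊∑_{j∈C_h} x_frac(q,j)⌋ ≤ ∑_{j∈C_h} x_integ(q,j) ≤ ⌈∑_{j∈C_h} x_frac(q,j)⌉, then for every q: β·(∑_{j∈C} x_integ(q,j)) − (ρ+2) ≤ ∑_{j∈C_h} x_integ(q,j) ≤ α·(∑_{j∈C} x_integ(q,j)) + (ρ+2). -/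
theorem integ_is_sandwiched {Q C : Type*} [Fintype Q] [Fintype C] [DecidableEq C]
    (Ch : Finset C)
    (xfrac xinteg : Q × C → ℝ)
    (hfrac : ∀ p, 0 ≤ xfrac p ∧ xfrac p ≤ 1)
    (hinteg : ∀ p, xinteg p = 0 ∨ xinteg p = 1)
    (α β ρ : ℝ) (hβ : 0 ≤ β) (hβα : β ≤ α) (hα : α ≤ 1) (hρ : 0 ≤ ρ)
    (hGF : ∀ q : Q,
      β * (∑ j : C, xfrac (q, j)) - ρ ≤ ∑ j ∈ Ch, xfrac (q, j) ∧
      ∑ j ∈ Ch, xfrac (q, j) ≤ α * (∑ j : C, xfrac (q, j)) + ρ)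
    (hsand1 : ∀ q : Q,
      (⌊∑ j : C, xfrac (q, j)⌋ : ℝ) ≤ ∑ j : C, xinteg (q, j) ∧
      ∑ j : C, xinteg (q, j) ≤ (⌈∑ j : C, xfrac (q, j)⌉ : ℝ))
    (hsand2 : ∀ q : Q,
      (⌊∑ j ∈ Ch, xfrac (q, j)⌋ : ℝ) ≤ ∑ j ∈ Ch, xinteg (q, j) ∧
      ∑ j ∈ Ch, xinteg (q, j) ≤ (⌈∑ j ∈ Ch, xfrac (q, j)⌉ : ℝ)) :
    ∀ q : Q,
      β * (∑ j : C, xinteg (q, j)) - (ρ + 2) ≤ ∑ j ∈ Ch, xinteg (q, j) ∧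
      ∑ j ∈ Ch, xinteg (q, j) ≤ α * (∑ j : C, xinteg (q, j)) + (ρ + 2) := by
  intro q
  obtain ⟨h1, h2⟩ := hGF q
  obtain ⟨h3, h4⟩ := hsand1 q
  obtain ⟨h5, h6⟩ := hsand2 q
  set F := ∑ j : C, xfrac (q, j)
  set Fh := ∑ j ∈ Ch, xfrac (q, j)
  set I := ∑ j : C, xinteg (q, j)
  set Ih := ∑ j ∈ Ch, xinteg (q, j)
  have hf1 : (⌊F⌋ : ℝ) ≥ F - 1 := by
    have := Int.sub_one_lt_floor F; linarith
  have hf2 : (⌈F⌉ : ℝ) ≤ F + 1 := by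
    have := Int.ceil_lt_add_one F; linarith
  have hf3 : (⌊Fh⌋ : ℝ) ≥ Fh - 1 := by
    have := Int.sub_one_lt_floor Fh; linarith
  have hf4 : (⌈Fh⌉ : ℝ) ≤ Fh + 1 := by
    have := Int.ceil_lt_add_one Fh; linarith
  have hα0 : 0 ≤ α := le_trans hβ hβα
  have hIF : I ≤ F + 1 := le_trans h4 hf2
  have hFI : F - 1 ≤ I := le_trans hf1 h3
  constructor
  · nlinarith [mul_le_mul_of_nonneg_left hIF hβ]
  · nlinarith [mul_le_mul_of_nonneg_left hFI hα0]
end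

section
/- In the k-community instance with k ≥ 3 all-blue communities except one community containing only red and green points, any choice of k centers that includes at least one red and at least one green center uses at most k−2 blue centers; hence by pigeonhole some all-blue community contains no center, and every point of that community is at distance ≥ R from its assigned center, so the clustering cost is at least R. -/
/-- The `k`-community instance where all but the last community are blue and the
last community has only red and green points: any choice of at most `k` centers
containing a red center and a green center leaves some all-blue community with no
center, forcing clustering cost at least `R`. Colors: `0` = blue, `1` = red,
`2` = green. -/
theorem ds_unbounded_pof {X : Type*} [PseudoMetricSpace X] [Fintype X] [DecidableEq X]
    (k : ℕ) (hk : 3 ≤ k)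
    (comm : X → Fin k) (color : X → Fin 3)
    (hblue : ∀ x : X, (comm x).val < k - 1 → color x = 0)
    (hlast : ∀ x : X, (comm x).val = k - 1 → color x ≠ 0)
    (hnonempty : ∀ t : Fin k, ∃ x : X, comm x = t)
    (R : ℝ) (hR : 0 < R)
    (hdist0 : ∀ x y : X, comm x = comm y → dist x y = 0)
    (hdistR : ∀ x y : X, comm x ≠ comm y → R ≤ dist x y)
    (S : Finset X) (hScard : S.card ≤ k)
    (hred : ∃ s ∈ S, color s = 1) (hgreen : ∃ s ∈ S, color s = 2)
    (φ : X → X) (hφ : ∀ x, φ x ∈ S) :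
    ((S.filter (fun s => color s = 0)).card ≤ k - 2) ∧
    (∃ t : Fin k, t.val < k - 1 ∧ ∀ s ∈ S, comm s ≠ t) ∧
    ∃ x : X, R ≤ dist x (φ x) := by
  classical
  obtain ⟨r, hrS, hr⟩ := hred
  obtain ⟨g, hgS, hg⟩ := hgreen
  have hrg : r ≠ g := by
    intro h; rw [h, hg] at hr; exact absurd hr (by decide)
  -- Part 1
  have hsubset : S.filter (fun s => color s = 0) ⊆ (S.erase r).erase g := by
    intro s hs
    simp only [Finset.mem_filter] at hs
    refine Finset.mem_erase.2 ⟨?_, Finset.mem_erase.2 ⟨?_, hs.1⟩⟩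
    · intro h; rw [h, hg] at hs; exact absurd hs.2 (by decide)
    · intro h; rw [h, hr] at hs; exact absurd hs.2 (by decide)
  have hcard1 : (S.filter (fun s => color s = 0)).card ≤ k - 2 := by
    have h1 : ((S.erase r).erase g).card = S.card - 2 := by
      rw [Finset.card_erase_of_mem (Finset.mem_erase.2 ⟨hrg.symm, hgS⟩),
        Finset.card_erase_of_mem hrS]
      omega
    have := Finset.card_le_card hsubset
    omega
  refine ⟨hcard1, ?_⟩
  -- Part 2: pigeonhole
  have hBsub : (S.filter (fun s => color s = 0)).image comm ⊆
      Finset.univ.filter (fun t : Fin k => t.val < k - 1) := by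
    intro t ht
    obtain ⟨s, hs, hst⟩ := Finset.mem_image.1 ht
    simp only [Finset.mem_filter] at hs ⊢
    refine ⟨Finset.mem_univ _, ?_⟩
    rw [← hst]
    by_contra h
    have hval : (comm s).val = k - 1 := by
      have := (comm s).isLt; omega
    exact hlast s hval hs.2
  have hfiltcard : (Finset.univ.filter (fun t : Fin k => t.val < k - 1)).card = k - 1 := by
    have hsplit := Finset.card_filter_add_card_filter_not
      (s := (Finset.univ : Finset (Fin k))) (p := fun t : Fin k => t.val < k - 1)
    have hneg : Finset.univ.filter (fun t : Fin k => ¬ t.val < k - 1)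
        = {⟨k - 1, by omega⟩} := by
      ext t
      simp only [Finset.mem_filter, Finset.mem_univ, true_and, Finset.mem_singleton]
      constructor
      · intro h
        have := t.isLt
        exact Fin.ext (by simp only [Fin.val_mk]; omega)
      · intro h; rw [h]; simp only [Fin.val_mk]; omega
    rw [hneg, Finset.card_singleton, Finset.card_univ, Fintype.card_fin] at hsplit
    omega
  have hlt : ((S.filter (fun s => color s = 0)).image comm).card <
      (Finset.univ.filter (fun t : Fin k => t.val < k - 1)).card := by
    have := Finset.card_image_le (s := S.filter (fun s => color s = 0)) (f := comm)
    omega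
  have hss : (S.filter (fun s => color s = 0)).image comm ⊂
      Finset.univ.filter (fun t : Fin k => t.val < k - 1) :=
    Finset.ssubset_iff_subset_ne.2 ⟨hBsub, fun h => by rw [h] at hlt; omega⟩
  obtain ⟨t, htmem, htnot⟩ := Finset.exists_of_ssubset hss
  simp only [Finset.mem_filter, Finset.mem_univ, true_and] at htmem
  have hnoc : ∀ s ∈ S, comm s ≠ t := by
    intro s hs hst
    apply htnot
    refine Finset.mem_image.2 ⟨s, Finset.mem_filter.2 ⟨hs, ?_⟩, hst⟩
    exact hblue s (by rw [hst]; exact htmem)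
  refine ⟨⟨t, htmem, hnoc⟩, ?_⟩
  obtain ⟨x, hx⟩ := hnonempty t
  exact ⟨x, hdistR x (φ x) (by rw [hx]; exact fun h => hnoc _ (hφ x) h.symm)⟩
end
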